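/- arXiv:2605.13744 — 2 statements merged into one kernel-verified Lean document; each statement's English description precedes it below -/
import Mathlib

section
/- Let V be a real inner product space (e.g. ℝ^{m×m} with the Frobenius norm), let G be a finite group acting on V by linear isometries π_A, and let Ψ : V → V be any map. Given training pairs (X_n, Ŷ_n) ∈ V × V for n = 1, …, N, define the empirical risk L(Ψ) = (1/N) Σ_{n=1}^N ‖X_n − Ψ(Ŷ_n)‖² and the averaged operator Ψ̄(v) = (1/|G|) Σ_{A ∈ G} π_A( Ψ( π_A⁻¹(v) ) ). Then L(Ψ̄) ≤ 2·L(Ψ) + (2/N) Σ_{n=1}^N (1/|G|) Σ_{A ∈ G} ‖ Ψ(Ŷ_n) − π_A( Ψ( π_A⁻¹(Ŷ_n) ) ) ‖². -/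
/-- **central estimate in the proof of Theorem 4.2.**
Let `V` be a real inner product space, `G` a finite group acting on `V` by linear
isometries `π_A`, and `Ψ : V → V` any map.  For training pairs `(X_n, Ŷ_n)`, the
empirical risk of the Reynolds-averaged operator
`Ψ̄(v) = (1/|G|) Σ_{A} π_A(Ψ(π_A⁻¹(v)))` satisfies
`L(Ψ̄) ≤ 2 L(Ψ) + (2/N) Σ_n (1/|G|) Σ_A ‖Ψ(Ŷ_n) − π_A(Ψ(π_A⁻¹(Ŷ_n)))‖²`. -/
theorem stmt_12 {G : Type*} [Group G] [Fintype G]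
    {V : Type*} [NormedAddCommGroup V] [InnerProductSpace ℝ V]
    (π : G →* (V ≃ₗᵢ[ℝ] V)) (Ψ : V → V)
    (N : ℕ) (hN : 0 < N) (X Yhat : Fin N → V)
    (Ψbar : V → V)
    (hΨbar : ∀ v, Ψbar v = (Fintype.card G : ℝ)⁻¹ • ∑ A : G, π A (Ψ ((π A).symm v))) :
    (1 / (N : ℝ)) * ∑ n, ‖X n - Ψbar (Yhat n)‖ ^ 2
      ≤ 2 * ((1 / (N : ℝ)) * ∑ n, ‖X n - Ψ (Yhat n)‖ ^ 2)
        + (2 / (N : ℝ)) * ∑ n, (Fintype.card G : ℝ)⁻¹ *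
            ∑ A : G, ‖Ψ (Yhat n) - π A (Ψ ((π A).symm (Yhat n)))‖ ^ 2 := by
  have hk : (0 : ℝ) < (Fintype.card G : ℝ) := by
    exact_mod_cast Fintype.card_pos
  have key : ∀ n : Fin N, ‖X n - Ψbar (Yhat n)‖ ^ 2
      ≤ 2 * ‖X n - Ψ (Yhat n)‖ ^ 2 + 2 * ((Fintype.card G : ℝ)⁻¹ *
          ∑ A : G, ‖Ψ (Yhat n) - π A (Ψ ((π A).symm (Yhat n)))‖ ^ 2) := by
    intro n
    set c := Ψ (Yhat n) with hc
    set k : ℝ := (Fintype.card G : ℝ) with hkdef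
    have hdiff : c - Ψbar (Yhat n)
        = k⁻¹ • ∑ A : G, (c - π A (Ψ ((π A).symm (Yhat n)))) := by
      rw [hΨbar, Finset.sum_sub_distrib, smul_sub, Finset.sum_const,
        Finset.card_univ, ← Nat.cast_smul_eq_nsmul ℝ, smul_smul,
        inv_mul_cancel₀ hk.ne', one_smul]
    -- bound ‖c - Ψbar y‖² by k⁻¹ * Σ ‖·‖²
    have h1 : ‖c - Ψbar (Yhat n)‖ ≤ k⁻¹ * ∑ A : G, ‖c - π A (Ψ ((π A).symm (Yhat n)))‖ := by
      rw [hdiff, norm_smul, norm_inv, Real.norm_natCast]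
      exact mul_le_mul_of_nonneg_left (norm_sum_le _ _) (by positivity)
    have h2 : ‖c - Ψbar (Yhat n)‖ ^ 2 ≤ k⁻¹ *
        ∑ A : G, ‖c - π A (Ψ ((π A).symm (Yhat n)))‖ ^ 2 := by
      have hCS : (∑ A : G, ‖c - π A (Ψ ((π A).symm (Yhat n)))‖) ^ 2
          ≤ (Finset.univ : Finset G).card *
            ∑ A : G, ‖c - π A (Ψ ((π A).symm (Yhat n)))‖ ^ 2 :=
        sq_sum_le_card_mul_sum_sq
      calc ‖c - Ψbar (Yhat n)‖ ^ 2
          ≤ (k⁻¹ * ∑ A : G, ‖c - π A (Ψ ((π A).symm (Yhat n)))‖) ^ 2 := by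
            apply pow_le_pow_left₀ (norm_nonneg _) h1
        _ = k⁻¹ * k⁻¹ * (∑ A : G, ‖c - π A (Ψ ((π A).symm (Yhat n)))‖) ^ 2 := by ring
        _ ≤ k⁻¹ * k⁻¹ * (k * ∑ A : G, ‖c - π A (Ψ ((π A).symm (Yhat n)))‖ ^ 2) := by
            apply mul_le_mul_of_nonneg_left _ (by positivity)
            simpa [hkdef, Finset.card_univ] using hCS
        _ = k⁻¹ * (k⁻¹ * k) * ∑ A : G, ‖c - π A (Ψ ((π A).symm (Yhat n)))‖ ^ 2 := by ring
        _ = k⁻¹ * ∑ A : G, ‖c - π A (Ψ ((π A).symm (Yhat n)))‖ ^ 2 := by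
            rw [inv_mul_cancel₀ hk.ne', mul_one]
    have htri : ‖X n - Ψbar (Yhat n)‖ ^ 2
        ≤ 2 * ‖X n - c‖ ^ 2 + 2 * ‖c - Ψbar (Yhat n)‖ ^ 2 := by
      have h := norm_sub_le_norm_sub_add_norm_sub (X n) c (Ψbar (Yhat n))
      nlinarith [norm_nonneg (X n - c), norm_nonneg (c - Ψbar (Yhat n)),
        norm_nonneg (X n - Ψbar (Yhat n)), sq_nonneg (‖X n - c‖ - ‖c - Ψbar (Yhat n)‖)]
    calc ‖X n - Ψbar (Yhat n)‖ ^ 2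
        ≤ 2 * ‖X n - c‖ ^ 2 + 2 * ‖c - Ψbar (Yhat n)‖ ^ 2 := htri
      _ ≤ 2 * ‖X n - c‖ ^ 2 + 2 * (k⁻¹ *
          ∑ A : G, ‖c - π A (Ψ ((π A).symm (Yhat n)))‖ ^ 2) := by linarith
  have hsum : ∑ n, ‖X n - Ψbar (Yhat n)‖ ^ 2
      ≤ ∑ n, (2 * ‖X n - Ψ (Yhat n)‖ ^ 2 + 2 * ((Fintype.card G : ℝ)⁻¹ *
          ∑ A : G, ‖Ψ (Yhat n) - π A (Ψ ((π A).symm (Yhat n)))‖ ^ 2)) :=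
    Finset.sum_le_sum fun n _ => key n
  have hNpos : (0 : ℝ) < N := by exact_mod_cast hN
  rw [Finset.sum_add_distrib, ← Finset.mul_sum, ← Finset.mul_sum] at hsum
  have := mul_le_mul_of_nonneg_left hsum (le_of_lt (one_div_pos.mpr hNpos))
  calc (1 / (N : ℝ)) * ∑ n, ‖X n - Ψbar (Yhat n)‖ ^ 2
      ≤ (1 / (N : ℝ)) * (2 * ∑ n, ‖X n - Ψ (Yhat n)‖ ^ 2
        + 2 * ∑ n, (Fintype.card G : ℝ)⁻¹ *
            ∑ A : G, ‖Ψ (Yhat n) - π A (Ψ ((π A).symm (Yhat n)))‖ ^ 2) := this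
    _ = 2 * ((1 / (N : ℝ)) * ∑ n, ‖X n - Ψ (Yhat n)‖ ^ 2)
        + (2 / (N : ℝ)) * ∑ n, (Fintype.card G : ℝ)⁻¹ *
            ∑ A : G, ‖Ψ (Yhat n) - π A (Ψ ((π A).symm (Yhat n)))‖ ^ 2 := by ring
end

section
/- Let V be a real inner product space (e.g. ℝ^{m×m} with the Frobenius norm), let G be a finite group acting on V by linear isometries π_A, and let (X_n, Ŷ_n) ∈ V × V, n = 1, …, N, be training pairs with empirical risk L(Ψ) = (1/N) Σ_{n=1}^N ‖X_n − Ψ(Ŷ_n)‖². Let Λ be a set of maps V → V and Λ_EQ = { Ψ ∈ Λ : Ψ(π_A(v)) = π_A(Ψ(v)) for all A ∈ G and all v ∈ V } its equivariant subset. Suppose: (i) Ψ* ∈ Λ minimizes L over Λ and Ψ*_EQ ∈ Λ_EQ minimizes L over Λ_EQ; (ii) the Reynolds average Ψ̄*(v) = (1/|G|) Σ_{A ∈ G} π_A( Ψ*( π_A⁻¹(v) ) ) belongs to Λ_EQ; (iii) there exist constants C, Ĉ ≥ 0, a mesh size h > 0, and a symmetry error ε ≥ 0 such that for every n and every A ∈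 G, ‖ Ψ*( π_A(Ỹ) ) − π_A( Ψ*(Ỹ) ) ‖² ≤ C·h² + Ĉ·ε, where Ỹ = π_A⁻¹(Ŷ_n). Then the empirical risk of the equivariant minimizer satisfies L(Ψ*_EQ) ≤ 2·L(Ψ*) + 2C·h² + 2Ĉ·ε. -/
/-- **Theorem 4.2, Empirical Risk of Equivariant Network.**
Let `V` be a real inner product space, `G` a finite group acting on `V` by linear
isometries `π_A`, `(X_n, Ŷ_n)` training pairs with empirical risk
`L(Ψ) = (1/N) Σ ‖X_n − Ψ(Ŷ_n)‖²`, `Λ` a set of maps and `Λ_EQ` its equivariant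
subset.  If `Ψ*` minimizes `L` over `Λ`, `Ψ*_EQ` minimizes `L` over `Λ_EQ`, the
Reynolds average of `Ψ*` lies in `Λ_EQ`, and the equivariance error of `Ψ*` is
bounded by `C·h² + Ĉ·ε`, then `L(Ψ*_EQ) ≤ 2·L(Ψ*) + 2C·h² + 2Ĉ·ε`. -/
theorem stmt_13 {G : Type*} [Group G] [Fintype G]
    {V : Type*} [NormedAddCommGroup V] [InnerProductSpace ℝ V]
    (π : G →* (V ≃ₗᵢ[ℝ] V))
    (N : ℕ) (hN : 0 < N) (X Yhat : Fin N → V)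
    (L : (V → V) → ℝ)
    (hL : ∀ Ψ : V → V, L Ψ = (1 / (N : ℝ)) * ∑ n, ‖X n - Ψ (Yhat n)‖ ^ 2)
    (Λ : Set (V → V))
    (ΛEQ : Set (V → V))
    (hΛEQ : ΛEQ = {Ψ ∈ Λ | ∀ (A : G) (v : V), Ψ (π A v) = π A (Ψ v)})
    (Ψstar ΨstarEQ : V → V)
    (hΨstar : Ψstar ∈ Λ) (hΨstarmin : ∀ Ψ ∈ Λ, L Ψstar ≤ L Ψ)
    (hΨstarEQ : ΨstarEQ ∈ ΛEQ) (hΨstarEQmin : ∀ Ψ ∈ ΛEQ, L ΨstarEQ ≤ L Ψ)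
    (hreynolds :
      (fun v => (Fintype.card G : ℝ)⁻¹ • ∑ A : G, π A (Ψstar ((π A).symm v))) ∈ ΛEQ)
    (C Chat h ε : ℝ) (hC : 0 ≤ C) (hChat : 0 ≤ Chat) (hh : 0 < h) (hε : 0 ≤ ε)
    (hbound : ∀ (n : Fin N) (A : G),
      ‖Ψstar (π A ((π A).symm (Yhat n))) - π A (Ψstar ((π A).symm (Yhat n)))‖ ^ 2
        ≤ C * h ^ 2 + Chat * ε) :
    L ΨstarEQ ≤ 2 * L Ψstar + 2 * C * h ^ 2 + 2 * Chat * ε := by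
  set Ψbar : V → V := fun v => (Fintype.card G : ℝ)⁻¹ • ∑ A : G, π A (Ψstar ((π A).symm v))
  have hk : (0:ℝ) < (Fintype.card G : ℝ) := by
    exact_mod_cast Fintype.card_pos
  -- pointwise bound
  have key : ∀ n : Fin N, ‖X n - Ψbar (Yhat n)‖ ^ 2
      ≤ 2 * ‖X n - Ψstar (Yhat n)‖ ^ 2 + (2 * C * h ^ 2 + 2 * Chat * ε) := by
    intro n
    set k : ℝ := (Fintype.card G : ℝ)
    have hdecomp : X n - Ψbar (Yhat n)
        = k⁻¹ • ∑ A : G, (X n - π A (Ψstar ((π A).symm (Yhat n)))) := by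
      simp only [Ψbar, Finset.sum_sub_distrib, smul_sub, Finset.sum_const,
        Finset.card_univ, ← Nat.cast_smul_eq_nsmul ℝ, smul_smul,
        inv_mul_cancel₀ hk.ne', one_smul, k]
    have hterm : ∀ A : G, ‖X n - π A (Ψstar ((π A).symm (Yhat n)))‖ ^ 2
        ≤ 2 * ‖X n - Ψstar (Yhat n)‖ ^ 2 + 2 * (C * h ^ 2 + Chat * ε) := by
      intro A
      have hY : π A ((π A).symm (Yhat n)) = Yhat n := (π A).apply_symm_apply _
      have h1 : X n - π A (Ψstar ((π A).symm (Yhat n)))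
          = (X n - Ψstar (Yhat n))
            + (Ψstar (π A ((π A).symm (Yhat n))) - π A (Ψstar ((π A).symm (Yhat n)))) := by
        rw [hY]; abel
      have h2 := norm_add_le (X n - Ψstar (Yhat n))
        (Ψstar (π A ((π A).symm (Yhat n))) - π A (Ψstar ((π A).symm (Yhat n))))
      have h3 := hbound n A
      have ha := norm_nonneg (X n - Ψstar (Yhat n))
      have hb := norm_nonneg
        (Ψstar (π A ((π A).symm (Yhat n))) - π A (Ψstar ((π A).symm (Yhat n))))
      have h2' := pow_le_pow_left₀ (norm_nonneg _) h2 2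
      rw [h1]
      nlinarith [h2', sq_nonneg (‖X n - Ψstar (Yhat n)‖ - ‖Ψstar (π A ((π A).symm (Yhat n))) - π A (Ψstar ((π A).symm (Yhat n)))‖)]
    -- Jensen via Cauchy-Schwarz
    have hnorm : ‖X n - Ψbar (Yhat n)‖
        ≤ k⁻¹ * ∑ A : G, ‖X n - π A (Ψstar ((π A).symm (Yhat n)))‖ := by
      rw [hdecomp, norm_smul, Real.norm_eq_abs, abs_inv, abs_of_pos hk]
      exact mul_le_mul_of_nonneg_left (norm_sum_le _ _) (by positivity)
    have hsq : (∑ A : G, ‖X n - π A (Ψstar ((π A).symm (Yhat n)))‖) ^ 2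
        ≤ k * ∑ A : G, ‖X n - π A (Ψstar ((π A).symm (Yhat n)))‖ ^ 2 := by
      have := sq_sum_le_card_mul_sum_sq
        (s := (Finset.univ : Finset G))
        (f := fun A => ‖X n - π A (Ψstar ((π A).symm (Yhat n)))‖)
      simpa [Finset.card_univ, k] using this
    have hsum : ∑ A : G, ‖X n - π A (Ψstar ((π A).symm (Yhat n)))‖ ^ 2
        ≤ k * (2 * ‖X n - Ψstar (Yhat n)‖ ^ 2 + 2 * (C * h ^ 2 + Chat * ε)) := by
      calc ∑ A : G, ‖X n - π A (Ψstar ((π A).symm (Yhat n)))‖ ^ 2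
          ≤ ∑ _A : G, (2 * ‖X n - Ψstar (Yhat n)‖ ^ 2 + 2 * (C * h ^ 2 + Chat * ε)) :=
            Finset.sum_le_sum fun A _ => hterm A
        _ = k * (2 * ‖X n - Ψstar (Yhat n)‖ ^ 2 + 2 * (C * h ^ 2 + Chat * ε)) := by
            simp [Finset.sum_const, Finset.card_univ, k, mul_comm, mul_add]
    have hnn : (0:ℝ) ≤ ‖X n - Ψbar (Yhat n)‖ := norm_nonneg _
    have h4 : ‖X n - Ψbar (Yhat n)‖ ^ 2
        ≤ (k⁻¹ * ∑ A : G, ‖X n - π A (Ψstar ((π A).symm (Yhat n)))‖) ^ 2 := by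
      apply sq_le_sq' _ hnorm
      nlinarith
    calc ‖X n - Ψbar (Yhat n)‖ ^ 2
        ≤ (k⁻¹ * ∑ A : G, ‖X n - π A (Ψstar ((π A).symm (Yhat n)))‖) ^ 2 := h4
      _ = k⁻¹ ^ 2 * (∑ A : G, ‖X n - π A (Ψstar ((π A).symm (Yhat n)))‖) ^ 2 := by ring
      _ ≤ k⁻¹ ^ 2 * (k * ∑ A : G, ‖X n - π A (Ψstar ((π A).symm (Yhat n)))‖ ^ 2) := by
          gcongr
      _ ≤ k⁻¹ ^ 2 * (k * (k * (2 * ‖X n - Ψstar (Yhat n)‖ ^ 2 + 2 * (C * h ^ 2 + Chat * ε)))) := by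
          have hnn2 : (0:ℝ) ≤ k⁻¹ ^ 2 * k := by positivity
          nlinarith
      _ = 2 * ‖X n - Ψstar (Yhat n)‖ ^ 2 + (2 * C * h ^ 2 + 2 * Chat * ε) := by
          field_simp
  -- assemble
  have hLbar : L Ψbar ≤ 2 * L Ψstar + 2 * C * h ^ 2 + 2 * Chat * ε := by
    rw [hL, hL]
    have hNpos : (0:ℝ) < (N:ℝ) := by exact_mod_cast hN
    have hsum : ∑ n, ‖X n - Ψbar (Yhat n)‖ ^ 2
        ≤ ∑ n, (2 * ‖X n - Ψstar (Yhat n)‖ ^ 2 + (2 * C * h ^ 2 + 2 * Chat * ε)) :=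
      Finset.sum_le_sum fun n _ => key n
    have hexp : ∑ n, (2 * ‖X n - Ψstar (Yhat n)‖ ^ 2 + (2 * C * h ^ 2 + 2 * Chat * ε))
        = 2 * ∑ n, ‖X n - Ψstar (Yhat n)‖ ^ 2 + (N:ℝ) * (2 * C * h ^ 2 + 2 * Chat * ε) := by
      rw [Finset.sum_add_distrib, Finset.sum_const, Finset.mul_sum]
      simp only [nsmul_eq_mul, Finset.card_univ, Fintype.card_fin, ← Finset.mul_sum]
    have : (1 / (N:ℝ)) * ∑ n, ‖X n - Ψbar (Yhat n)‖ ^ 2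
        ≤ (1 / (N:ℝ)) * (2 * ∑ n, ‖X n - Ψstar (Yhat n)‖ ^ 2 + (N:ℝ) * (2 * C * h ^ 2 + 2 * Chat * ε)) := by
      apply mul_le_mul_of_nonneg_left _ (by positivity)
      rw [← hexp]; exact hsum
    calc (1 / (N:ℝ)) * ∑ n, ‖X n - Ψbar (Yhat n)‖ ^ 2 ≤ _ := this
      _ = 2 * ((1 / (N:ℝ)) * ∑ n, ‖X n - Ψstar (Yhat n)‖ ^ 2) + 2 * C * h ^ 2 + 2 * Chat * ε := by
          field_simp
          ring
  exact le_trans (hΨstarEQmin Ψbar hreynolds) hLbar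
end
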